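/- There exist matrices g, h ∈ GL_{n+1}(𝒪) such that, as matrices over K, t^{−λ} · x · t^{ν*} = g · t^{μ} · h. (This is the content of the assertion that the point ξ = ([λ], x[λ+μ−Nβ∨], [0]) belongs to the cyclic convolution variety Gr_{c(λ,μ,ν)} with ν = −w₀ν*: the relative position of [λ] and x[ν*] equals μ.) -/

import Mathlib

open Matrix

noncomputable section

/-- The ring `𝒪 = ℂ[[t]]` of formal power series. -/
abbrev OO : Type := PowerSeries ℂ

/-- The field `K = ℂ((t))` of formal Laurent series. -/
abbrev KK : Type := LaurentSeries ℂ

/-- `t^k ∈ K` for an integer `k`. -/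
def tz (k : ℤ) : KK := HahnSeries.single k 1

/-- The inclusion `𝒪 → K`. -/
def coeO : OO →+* KK := HahnSeries.ofPowerSeries ℤ ℂ

/-- The `GL`-coordinates of the coroot `β∨ = e_p − e_{q+1}` (indices `0`-based). -/
def bcov (p q : ℕ) (i : ℕ) : ℤ := (if i = p then 1 else 0) - (if i = q + 1 then 1 else 0)

/-- The matrix `x = I + Σ_{j=p+1}^{q+1} t^{λ_p − λ_j − N} E_{p,j}` (indices `0`-based). -/
def xMat (n N p q : ℕ) (lam : ℕ → ℤ) : Matrix (Fin (n+1)) (Fin (n+1)) KK :=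
  Matrix.of fun i j =>
    if i = j then 1
    else if (i : ℕ) = p ∧ p < (j : ℕ) ∧ (j : ℕ) ≤ q + 1 then tz (lam p - lam j - N)
    else 0

lemma tz_mul (a b : ℤ) : tz a * tz b = tz (a + b) := by
  simp [tz, HahnSeries.single_mul_single]

lemma coeO_X_pow (m : ℕ) : coeO (PowerSeries.X ^ m) = tz (m : ℤ) := by
  simp [coeO, tz, HahnSeries.ofPowerSeries_X_pow]

lemma sum_range_delta {m : ℕ} {R : Type*} [CommRing R] (p q : ℕ) (c : Fin m → R)
    (f : Fin m → Fin m → R)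
    (hf : ∀ k : Fin m, p < (k:ℕ) → (k:ℕ) ≤ q → ∀ l, f k l = if l = k then 1 else 0)
    (l : Fin m) :
    (∑ k : Fin m, (if p < (k:ℕ) ∧ (k:ℕ) ≤ q then c k else 0) * f k l)
      = if p < (l:ℕ) ∧ (l:ℕ) ≤ q then c l else 0 := by
  have hpt : ∀ k : Fin m, (if p < (k:ℕ) ∧ (k:ℕ) ≤ q then c k else 0) * f k l
      = if k = l then (if p < (k:ℕ) ∧ (k:ℕ) ≤ q then c k else 0) else 0 := by
    intro k
    by_cases hk : p < (k:ℕ) ∧ (k:ℕ) ≤ q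
    · rw [if_pos hk, hf k hk.1 hk.2 l]
      by_cases hkl : k = l
      · subst hkl; simp
      · simp [hkl, Ne.symm hkl]
    · simp [hk]
  rw [Finset.sum_congr rfl fun k _ => hpt k]
  simp

/-- there exist `g, h ∈ GL_{n+1}(𝒪)` with `t^{−λ} · x · t^{ν*} = g · t^{μ} · h`
over `K`, where `ν* = λ + μ − Nβ∨`.  (Indices are `0`-based: rows and columns run through
`0,…,n`, and `0 ≤ p ≤ q ≤ n−1`.) -/
theorem stmt1 (n : ℕ) (hn : 1 ≤ n) (N : ℕ) (hN : 1 ≤ N)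
    (p q : ℕ) (hpq : p ≤ q) (hq : q < n)
    (lam mu : ℕ → ℤ)
    (hlam : ∀ i j : ℕ, i ≤ j → j ≤ n → lam j ≤ lam i)
    (hmu : ∀ i j : ℕ, i ≤ j → j ≤ n → mu j ≤ mu i)
    (nus : ℕ → ℤ) (hnus : ∀ i, nus i = lam i + mu i - N * bcov p q i)
    (hnusdom : ∀ i j : ℕ, i ≤ j → j ≤ n → nus j ≤ nus i)
    (h2a : (N : ℤ) ≤ lam p - lam (p + 1)) (h2b : (N : ℤ) ≤ lam q - lam (q + 1))
    (h2c : (N : ℤ) ≤ mu p - mu (p + 1)) (h2d : (N : ℤ) ≤ mu q - mu (q + 1)) :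
    ∃ g h : Matrix (Fin (n+1)) (Fin (n+1)) OO,
      IsUnit g.det ∧ IsUnit h.det ∧
      Matrix.diagonal (fun i : Fin (n+1) => tz (-(lam i))) * xMat n N p q lam *
          Matrix.diagonal (fun i : Fin (n+1) => tz (nus i)) =
        g.map coeO * Matrix.diagonal (fun i : Fin (n+1) => tz (mu i)) * h.map coeO := by
  have hpn : p < n + 1 := by omega
  have hqn : q + 1 < n + 1 := by omega
  set P : Fin (n+1) := ⟨p, hpn⟩ with hPdef
  set Q1 : Fin (n+1) := ⟨q+1, hqn⟩ with hQ1def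
  have hPval : (P : ℕ) = p := rfl
  have hQval : (Q1 : ℕ) = q + 1 := rfl
  have hPQ : P ≠ Q1 := by simp [Fin.ext_iff]; omega
  have hA : (0:ℤ) ≤ mu p - N - mu (q+1) := by
    have := hmu (p+1) (q+1) (by omega) (by omega); omega
  have hB : ∀ l : ℕ, p < l → l ≤ q → (0:ℤ) ≤ mu l - N - mu (q+1) := by
    intro l h1 h2; have := hmu l q h2 (by omega); omega
  set g : Matrix (Fin (n+1)) (Fin (n+1)) OO := Matrix.of (fun i k =>
    if i = P then (if k = Q1 then 1 else 0)
    else if i = Q1 then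
      ((if k = P then 1 else 0) + (if k = Q1 then PowerSeries.X ^ N else 0)
        + (if p < (k:ℕ) ∧ (k:ℕ) ≤ q then -1 else 0))
    else (if k = i then 1 else 0)) with hgdef
  set gi : Matrix (Fin (n+1)) (Fin (n+1)) OO := Matrix.of (fun i k =>
    if i = P then ((if k = P then -(PowerSeries.X ^ N) else 0) + (if k = Q1 then 1 else 0)
        + (if p < (k:ℕ) ∧ (k:ℕ) ≤ q then 1 else 0))
    else if i = Q1 then (if k = P then 1 else 0)
    else (if k = i then 1 else 0)) with hgidef
  set h : Matrix (Fin (n+1)) (Fin (n+1)) OO := Matrix.of (fun k l =>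
    if k = P then (if l = P then -1 else 0)
    else if k = Q1 then
      ((if l = P then PowerSeries.X ^ (mu p - N - mu (q+1)).toNat else 0)
        + (if l = Q1 then 1 else 0)
        + (if p < (l:ℕ) ∧ (l:ℕ) ≤ q then PowerSeries.X ^ (mu (l:ℕ) - N - mu (q+1)).toNat else 0))
    else (if l = k then 1 else 0)) with hhdef
  set hi : Matrix (Fin (n+1)) (Fin (n+1)) OO := Matrix.of (fun k l =>
    if k = P then (if l = P then -1 else 0)
    else if k = Q1 then
      ((if l = P then PowerSeries.X ^ (mu p - N - mu (q+1)).toNat else 0)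
        + (if l = Q1 then 1 else 0)
        + (if p < (l:ℕ) ∧ (l:ℕ) ≤ q then -(PowerSeries.X ^ (mu (l:ℕ) - N - mu (q+1)).toNat) else 0))
    else (if l = k then 1 else 0)) with hhidef
  have hneP : ∀ k : Fin (n+1), p < (k:ℕ) → k ≠ P := by
    intro k hk hc; subst hc; rw [hPval] at hk; omega
  have hneQ : ∀ k : Fin (n+1), (k:ℕ) ≤ q → k ≠ Q1 := by
    intro k hk hc; subst hc; rw [hQval] at hk; omega
  -- entry lemmas
  have hgP : ∀ k, g P k = if k = Q1 then 1 else 0 := by intro k; simp [hgdef]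
  have hgQ : ∀ k, g Q1 k = (if k = P then 1 else 0) + (if k = Q1 then PowerSeries.X ^ N else 0)
      + (if p < (k:ℕ) ∧ (k:ℕ) ≤ q then -1 else 0) := by
    intro k; simp [hgdef, Ne.symm hPQ]
  have hgO : ∀ i : Fin (n+1), i ≠ P → i ≠ Q1 → ∀ k, g i k = if k = i then 1 else 0 := by
    intro i h1 h2 k; simp [hgdef, h1, h2]
  have hgiP : ∀ k, gi P k = (if k = P then -(PowerSeries.X ^ N) else 0) + (if k = Q1 then 1 else 0)
      + (if p < (k:ℕ) ∧ (k:ℕ) ≤ q then 1 else 0) := by intro k; simp [hgidef]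
  have hgiQ : ∀ k, gi Q1 k = if k = P then 1 else 0 := by
    intro k; simp [hgidef, Ne.symm hPQ]
  have hgiO : ∀ i : Fin (n+1), i ≠ P → i ≠ Q1 → ∀ k, gi i k = if k = i then 1 else 0 := by
    intro i h1 h2 k; simp [hgidef, h1, h2]
  have hggi : g * gi = 1 := by
    refine Matrix.ext fun i l => ?_
    rw [Matrix.mul_apply, Matrix.one_apply]
    by_cases hiP : i = P
    · subst hiP
      rw [Finset.sum_congr rfl fun k _ => by rw [hgP k]]
      simp only [ite_mul, zero_mul, one_mul, Finset.sum_ite_eq', Finset.mem_univ, if_true]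
      rw [hgiQ l]
      by_cases hlP : l = P
      · subst hlP; simp
      · simp [hlP, Ne.symm hlP]
    · by_cases hiQ : i = Q1
      · subst hiQ
        rw [Finset.sum_congr rfl fun k _ => by rw [hgQ k]]
        simp only [add_mul, Finset.sum_add_distrib]
        rw [sum_range_delta p q (fun _ => (-1 : OO)) (fun k l => gi k l)
          (fun k h1 h2 l => hgiO k (hneP k h1) (hneQ k h2) l) l]
        simp only [ite_mul, zero_mul, one_mul, Finset.sum_ite_eq', Finset.mem_univ, if_true]
        rw [hgiP l, hgiQ l]
        by_cases hlP : l = P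
        · subst hlP
          have hr : ¬ (p < (P:ℕ) ∧ (P:ℕ) ≤ q) := by rw [hPval]; omega
          simp [Ne.symm hPQ, hPQ, hr]
        · by_cases hlQ : l = Q1
          · subst hlQ
            have hr : ¬ (p < (Q1:ℕ) ∧ (Q1:ℕ) ≤ q) := by rw [hQval]; omega
            simp [Ne.symm hPQ, hr, hlP]
          · by_cases hlr : p < (l:ℕ) ∧ (l:ℕ) ≤ q <;>
              simp [hlP, hlQ, Ne.symm hlQ, hlr]
      · rw [Finset.sum_congr rfl fun k _ => by rw [hgO i hiP hiQ k]]
        simp only [ite_mul, zero_mul, one_mul, Finset.sum_ite_eq', Finset.mem_univ, if_true]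
        rw [hgiO i hiP hiQ l]
        by_cases hli : l = i
        · subst hli; simp
        · simp [hli, Ne.symm hli]
  have hhP : ∀ l, h P l = if l = P then -1 else 0 := by intro l; simp [hhdef]
  have hhQ : ∀ l, h Q1 l = (if l = P then PowerSeries.X ^ (mu p - N - mu (q+1)).toNat else 0)
      + (if l = Q1 then 1 else 0)
      + (if p < (l:ℕ) ∧ (l:ℕ) ≤ q then PowerSeries.X ^ (mu (l:ℕ) - N - mu (q+1)).toNat else 0) := by
    intro l; simp [hhdef, Ne.symm hPQ]
  have hhO : ∀ k : Fin (n+1), k ≠ P → k ≠ Q1 → ∀ l, h k l = if l = k then 1 else 0 := by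
    intro k h1 h2 l; simp [hhdef, h1, h2]
  have hhiP : ∀ l, hi P l = if l = P then -1 else 0 := by intro l; simp [hhidef]
  have hhiQ : ∀ l, hi Q1 l = (if l = P then PowerSeries.X ^ (mu p - N - mu (q+1)).toNat else 0)
      + (if l = Q1 then 1 else 0)
      + (if p < (l:ℕ) ∧ (l:ℕ) ≤ q then -(PowerSeries.X ^ (mu (l:ℕ) - N - mu (q+1)).toNat) else 0) := by
    intro l; simp [hhidef, Ne.symm hPQ]
  have hhiO : ∀ k : Fin (n+1), k ≠ P → k ≠ Q1 → ∀ l, hi k l = if l = k then 1 else 0 := by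
    intro k h1 h2 l; simp [hhidef, h1, h2]
  have hrP : ¬ (p < (P:ℕ) ∧ (P:ℕ) ≤ q) := by rw [hPval]; omega
  have hrQ : ¬ (p < (Q1:ℕ) ∧ (Q1:ℕ) ≤ q) := by rw [hQval]; omega
  have hhhi : h * hi = 1 := by
    refine Matrix.ext fun i l => ?_
    rw [Matrix.mul_apply, Matrix.one_apply]
    by_cases hiP : i = P
    · subst hiP
      rw [Finset.sum_congr rfl fun k _ => by rw [hhP k]]
      simp only [ite_mul, zero_mul, neg_one_mul, Finset.sum_ite_eq', Finset.mem_univ, if_true]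
      rw [hhiP l]
      by_cases hlP : l = P
      · subst hlP; simp
      · simp [hlP, Ne.symm hlP]
    · by_cases hiQ : i = Q1
      · subst hiQ
        rw [Finset.sum_congr rfl fun k _ => by rw [hhQ k]]
        simp only [add_mul, Finset.sum_add_distrib]
        rw [sum_range_delta p q (fun k => PowerSeries.X ^ (mu (k:ℕ) - N - mu (q+1)).toNat)
          (fun k l => hi k l)
          (fun k h1 h2 l => hhiO k (hneP k h1) (hneQ k h2) l) l]
        simp only [ite_mul, zero_mul, one_mul, Finset.sum_ite_eq', Finset.mem_univ, if_true]
        rw [hhiP l, hhiQ l]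
        by_cases hlP : l = P
        · subst hlP
          simp [Ne.symm hPQ, hPQ, hrP]
        · by_cases hlQ : l = Q1
          · subst hlQ
            simp [Ne.symm hPQ, hrQ, hlP]
          · by_cases hlr : p < (l:ℕ) ∧ (l:ℕ) ≤ q <;>
              simp [hlP, hlQ, Ne.symm hlQ, hlr]
      · rw [Finset.sum_congr rfl fun k _ => by rw [hhO i hiP hiQ k]]
        simp only [ite_mul, zero_mul, one_mul, Finset.sum_ite_eq', Finset.mem_univ, if_true]
        rw [hhiO i hiP hiQ l]
        by_cases hli : l = i
        · subst hli; simp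
        · simp [hli, Ne.symm hli]
  have hbP : bcov p q p = 1 := by
    unfold bcov; rw [if_pos rfl, if_neg (by omega : ¬ p = q + 1)]; ring
  have hbQ : bcov p q (q+1) = -1 := by
    unfold bcov; rw [if_neg (by omega : ¬ q + 1 = p), if_pos rfl]; ring
  have hnusP : nus p = lam p + mu p - N := by rw [hnus p, hbP]; ring
  have hnusQ : nus (q+1) = lam (q+1) + mu (q+1) + N := by rw [hnus (q+1), hbQ]; ring
  have hnus0 : ∀ i : ℕ, i ≠ p → i ≠ q + 1 → nus i = lam i + mu i := by
    intro i h1 h2; rw [hnus i]; unfold bcov; rw [if_neg h1, if_neg h2]; ring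
  have hchP : ∀ l, coeO (h P l) = if l = P then -1 else 0 := by
    intro l; rw [hhP l]
    by_cases hlP : l = P
    · rw [if_pos hlP, if_pos hlP, _root_.map_neg, _root_.map_one]
    · rw [if_neg hlP, if_neg hlP, _root_.map_zero]
  have hchQ : ∀ l : Fin (n+1), coeO (h Q1 l)
      = (if l = P then tz (mu p - N - mu (q+1)) else 0) + (if l = Q1 then 1 else 0)
      + (if p < (l:ℕ) ∧ (l:ℕ) ≤ q then tz (mu (l:ℕ) - N - mu (q+1)) else 0) := by
    intro l
    rw [hhQ l, _root_.map_add, _root_.map_add]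
    congr 1
    · congr 1
      · by_cases hlP : l = P
        · subst hlP; rw [if_pos rfl, if_pos rfl, coeO_X_pow, Int.toNat_of_nonneg hA]
        · rw [if_neg hlP, if_neg hlP, _root_.map_zero]
      · by_cases hlQ : l = Q1
        · rw [if_pos hlQ, if_pos hlQ, _root_.map_one]
        · rw [if_neg hlQ, if_neg hlQ, _root_.map_zero]
    · by_cases hlr : p < (l:ℕ) ∧ (l:ℕ) ≤ q
      · rw [if_pos hlr, if_pos hlr, coeO_X_pow, Int.toNat_of_nonneg (hB _ hlr.1 hlr.2)]
      · rw [if_neg hlr, if_neg hlr, _root_.map_zero]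
  have hchO : ∀ k : Fin (n+1), k ≠ P → k ≠ Q1 → ∀ l, coeO (h k l) = if l = k then 1 else 0 := by
    intro k h1 h2 l; rw [hhO k h1 h2 l]
    by_cases hlk : l = k
    · rw [if_pos hlk, if_pos hlk, _root_.map_one]
    · rw [if_neg hlk, if_neg hlk, _root_.map_zero]
  refine ⟨g, h, Matrix.isUnit_det_of_right_inverse hggi, Matrix.isUnit_det_of_right_inverse hhhi, ?_⟩
  refine Matrix.ext fun i l => ?_
  rw [Matrix.mul_diagonal, Matrix.diagonal_mul, Matrix.mul_apply]
  simp only [Matrix.mul_diagonal, Matrix.map_apply, xMat, Matrix.of_apply]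
  by_cases hiP : i = P
  · subst hiP
    rw [Finset.sum_congr rfl fun k _ => by rw [hgP k]]
    simp only [apply_ite coeO, _root_.map_one, _root_.map_zero, ite_mul, zero_mul, one_mul,
      Finset.sum_ite_eq', Finset.mem_univ, if_true]
    rw [hchQ l]
    by_cases hlP : l = P
    · subst hlP
      simp [hPQ, hrP, hPval, tz_mul]
      congr 1
      have hmQ1 : mu (Q1:ℕ) = mu (q+1) := rfl
      omega
    · by_cases hlQ : l = Q1
      · subst hlQ
        simp [hPQ, Ne.symm hPQ, hrQ, hPval, hQval, tz_mul, (by omega : p < q + 1)]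
        congr 1
        omega
      · by_cases hlr : p < (l:ℕ) ∧ (l:ℕ) ≤ q
        · have h1 : p < (l:ℕ) ∧ (l:ℕ) ≤ q + 1 := ⟨hlr.1, by omega⟩
          have hPl : ¬ (P = l) := fun hc => hlP (by rw [← hc])
          have := hnus0 (l:ℕ) (by omega) (by omega)
          simp [hPl, hlP, hlQ, hlr, h1, hPval, tz_mul]
          congr 1
          have hmQ1 : mu (Q1:ℕ) = mu (q+1) := rfl
          omega
        · have hlq : (l:ℕ) ≠ q + 1 := fun hc => hlQ (Fin.val_injective (by rw [hc, hQval]))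
          have h1 : ¬ (p < (l:ℕ) ∧ (l:ℕ) ≤ q + 1) := by omega
          have hPl : ¬ (P = l) := fun hc => hlP (by rw [← hc])
          simp [hPl, hlP, hlQ, hlr, h1, hPval]
  · by_cases hiQ : i = Q1
    · subst hiQ
      have hpt : ∀ k : Fin (n+1), coeO (g Q1 k) * tz (mu (k:ℕ)) * coeO (h k l)
          = (if k = P then tz (mu p) * coeO (h P l) else 0)
          + (if k = Q1 then tz (N:ℤ) * tz (mu (q+1)) * coeO (h Q1 l) else 0)
          + (if k = l then (if p < (k:ℕ) ∧ (k:ℕ) ≤ q then -(tz (mu (k:ℕ))) else 0) else 0) := by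
        intro k
        rw [hgQ k]
        by_cases h1 : k = P
        · subst h1
          simp [hPQ, hrP, hPval]
        · by_cases h2 : k = Q1
          · subst h2
            simp [Ne.symm hPQ, hrQ, hQval, coeO_X_pow, apply_ite coeO]
          · by_cases h3 : p < (k:ℕ) ∧ (k:ℕ) ≤ q
            · by_cases h4 : k = l
              · subst h4
                simp [h1, h2, h3, apply_ite coeO, hchO k h1 h2, neg_one_mul]
                ring
              · simp [h1, h2, h3, h4, Ne.symm h4, apply_ite coeO, hchO k h1 h2, neg_one_mul]
            · simp [h1, h2, h3, apply_ite coeO]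
      rw [Finset.sum_congr rfl fun k _ => hpt k]
      simp only [Finset.sum_add_distrib, Finset.sum_ite_eq', Finset.mem_univ, if_true]
      rw [hchP l, hchQ l]
      have hQp : ¬ ((Q1:ℕ) = p) := by rw [hQval]; omega
      by_cases hlP : l = P
      · subst hlP
        have hQP : ¬ (Q1 = P) := Ne.symm hPQ
        simp [hQP, hPQ, hrP, hQp, tz_mul]
        ring
      · by_cases hlQ : l = Q1
        · subst hlQ
          simp [Ne.symm hPQ, hrQ, hQval, tz_mul, hlP]
          congr 1
          omega
        · by_cases hlr : p < (l:ℕ) ∧ (l:ℕ) ≤ q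
          · have hQl : ¬ (Q1 = l) := fun hc => hlQ (by rw [← hc])
            simp [hQl, hlP, hlQ, hlr, hQp, tz_mul]
          · have hQl : ¬ (Q1 = l) := fun hc => hlQ (by rw [← hc])
            simp [hQl, hlP, hlQ, hlr, hQp]
    · rw [Finset.sum_congr rfl fun k _ => by rw [hgO i hiP hiQ k]]
      simp only [apply_ite coeO, _root_.map_one, _root_.map_zero, ite_mul, zero_mul, one_mul,
        Finset.sum_ite_eq', Finset.mem_univ, if_true]
      rw [hchO i hiP hiQ l]
      have hip : (i:ℕ) ≠ p := fun hc => hiP (Fin.val_injective (by rw [hc, hPval]))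
      have hiq : (i:ℕ) ≠ q+1 := fun hc => hiQ (Fin.val_injective (by rw [hc, hQval]))
      have := hnus0 (i:ℕ) hip hiq
      by_cases hli : l = i
      · subst hli
        simp [hip, tz_mul]
        congr 1
        omega
      · simp [hli, Ne.symm hli, hip]
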